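/- arXiv:2602.06787 — 6 statements merged into one kernel-verified Lean document; each statement's English description precedes it below -/
import Mathlib

section
/- Let P and P' be finite graded posets, let c_t denote their GWL colorings, and let h_t denote the message-passing colorings induced by an arbitrary update function U and initial value h₀ (the same U and h₀ for both posets). Then for every t ∈ ℕ, every σ ∈ P and every σ' ∈ P': if c_t(σ) = c_t(σ') then h_t(σ) = h_t(σ'). Consequently, if P and P' are GWL-equivalent then for every t the histograms {{h_t(σ) : σ ∈ P}} and {{h_t(σ') : σ' ∈ P'}} are equal; that is, the GWL test is at least as powerful as any message-passing network on graded posets. -/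
/-- The nested color domain of the GWL test: a color at iteration `t+1` is a tuple of the
previous color together with the four adjacency multisets of previous colors. -/
def GWLC : ℕ → Type
  | 0 => Unit
  | t + 1 => GWLC t × Multiset (GWLC t) × Multiset (GWLC t) ×
      Multiset (GWLC t × GWLC t) × Multiset (GWLC t × GWLC t)

namespace GWL

variable {α : Type}

/-- `Covers lt τ σ` : `τ ⋖ σ`, i.e. `τ < σ` with nothing strictly in between. -/
def Covers (lt : α → α → Prop) (τ σ : α) : Prop :=
  lt τ σ ∧ ¬ ∃ q, lt τ q ∧ lt q σ

/-- A strict order `lt` together with a dimension function `dim` makes a graded poset. -/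
structure IsGradedPoset (lt : α → α → Prop) (dim : α → ℕ) : Prop where
  irrefl : ∀ x, ¬ lt x x
  trans : ∀ x y z, lt x y → lt y z → lt x z
  mono : ∀ x y, lt x y → dim x ≤ dim y
  cover : ∀ x y, Covers lt x y → dim y = dim x + 1

variable [Fintype α]

open Classical in
/-- The boundary `B(σ) = {τ : τ ⋖ σ}`. -/
noncomputable def boundary (lt : α → α → Prop) (σ : α) : Finset α :=
  Finset.univ.filter fun τ => Covers lt τ σ

open Classical in
/-- The coboundary `C(σ) = {τ : σ ⋖ τ}`. -/
noncomputable def coboundary (lt : α → α → Prop) (σ : α) : Finset α :=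
  Finset.univ.filter fun τ => Covers lt σ τ

open Classical in
/-- The lower adjacency `N↓(σ) = {(σ', τ) : τ ⋖ σ, τ ⋖ σ', σ' ≠ σ}`. -/
noncomputable def lowerAdj (lt : α → α → Prop) (σ : α) : Finset (α × α) :=
  Finset.univ.filter fun p => Covers lt p.2 σ ∧ Covers lt p.2 p.1 ∧ p.1 ≠ σ

open Classical in
/-- The upper adjacency `N↑(σ) = {(σ', τ) : σ ⋖ τ, σ' ⋖ τ, σ' ≠ σ}`. -/
noncomputable def upperAdj (lt : α → α → Prop) (σ : α) : Finset (α × α) :=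
  Finset.univ.filter fun p => Covers lt σ p.2 ∧ Covers lt p.1 p.2 ∧ p.1 ≠ σ

/-- The GWL coloring of a finite graded poset (with strict order `lt`). -/
noncomputable def color (lt : α → α → Prop) : (t : ℕ) → α → GWLC t
  | 0, _ => ()
  | t + 1, σ =>
      (color lt t σ,
       (boundary lt σ).val.map (color lt t),
       (coboundary lt σ).val.map (color lt t),
       (lowerAdj lt σ).val.map (fun p => (color lt t p.1, color lt t p.2)),
       (upperAdj lt σ).val.map (fun p => (color lt t p.1, color lt t p.2)))

/-- The histogram of GWL colors at iteration `t`. -/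
noncomputable def hist (lt : α → α → Prop) (t : ℕ) : Multiset (GWLC t) :=
  Finset.univ.val.map (color lt t)

end GWL

namespace GWL

/-- The message-passing coloring on a finite graded poset induced by an update function `U`
and an initial value `h₀`:
`h_{t+1}(σ) = U (h_t σ) {{h_t τ : τ ∈ B σ}} {{h_t τ : τ ∈ C σ}} {{(h_t σ', h_t τ) : (σ',τ) ∈ N↓ σ}} {{(h_t σ', h_t τ) : (σ',τ) ∈ N↑ σ}}`. -/
noncomputable def mp {α D : Type} [Fintype α]
    (U : D → Multiset D → Multiset D → Multiset (D × D) → Multiset (D × D) → D)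
    (h₀ : D) (lt : α → α → Prop) : ℕ → α → D
  | 0, _ => h₀
  | t + 1, σ => U (mp U h₀ lt t σ)
      ((boundary lt σ).val.map (mp U h₀ lt t))
      ((coboundary lt σ).val.map (mp U h₀ lt t))
      ((lowerAdj lt σ).val.map fun p => (mp U h₀ lt t p.1, mp U h₀ lt t p.2))
      ((upperAdj lt σ).val.map fun p => (mp U h₀ lt t p.1, mp U h₀ lt t p.2))

/-- Histogram of message-passing colorings. -/
noncomputable def mpHist {α D : Type} [Fintype α]
    (U : D → Multiset D → Multiset D → Multiset (D × D) → Multiset (D × D) → D)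
    (h₀ : D) (lt : α → α → Prop) (t : ℕ) : Multiset D :=
  Finset.univ.val.map (mp U h₀ lt t)

end GWL

/-- The GWL test is at least as powerful as any message-passing network on
graded posets: equal GWL colors imply equal message-passing features, and GWL-equivalence
implies equality of the message-passing histograms at every iteration. -/
theorem gwl_at_least_as_powerful_as_message_passing
    {α β D : Type} [Fintype α] [Fintype β]
    (ltα : α → α → Prop) (dimα : α → ℕ) (ltβ : β → β → Prop) (dimβ : β → ℕ)
    (hP : GWL.IsGradedPoset ltα dimα) (hP' : GWL.IsGradedPoset ltβ dimβ)
    (U : D → Multiset D → Multiset D → Multiset (D × D) → Multiset (D × D) → D)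
    (h₀ : D) :
    (∀ (t : ℕ) (σ : α) (σ' : β), GWL.color ltα t σ = GWL.color ltβ t σ' →
        GWL.mp U h₀ ltα t σ = GWL.mp U h₀ ltβ t σ') ∧
    ((∀ t : ℕ, GWL.hist ltα t = GWL.hist ltβ t) →
        ∀ t : ℕ, GWL.mpHist U h₀ ltα t = GWL.mpHist U h₀ ltβ t) := by
  classical
  -- Simultaneous statement: equal colors imply equal features, for all pairings.
  have key : ∀ t : ℕ,
      (∀ σ σ' : α, GWL.color ltα t σ = GWL.color ltα t σ' →
        GWL.mp U h₀ ltα t σ = GWL.mp U h₀ ltα t σ') ∧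
      (∀ σ σ' : β, GWL.color ltβ t σ = GWL.color ltβ t σ' →
        GWL.mp U h₀ ltβ t σ = GWL.mp U h₀ ltβ t σ') ∧
      (∀ (σ : α) (σ' : β), GWL.color ltα t σ = GWL.color ltβ t σ' →
        GWL.mp U h₀ ltα t σ = GWL.mp U h₀ ltβ t σ') := by
    intro t
    induction t with
    | zero => exact ⟨fun _ _ _ => rfl, fun _ _ _ => rfl, fun _ _ _ => rfl⟩
    | succ t ih =>
      obtain ⟨ihαα, ihββ, ihαβ⟩ := ih
      -- A function extracting the feature from a color.
      set F : GWLC t → D := fun c =>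
        if h : ∃ a : α, GWL.color ltα t a = c then GWL.mp U h₀ ltα t h.choose
        else if h' : ∃ b : β, GWL.color ltβ t b = c then GWL.mp U h₀ ltβ t h'.choose
        else h₀ with hFdef
      have hFα : ∀ a : α, GWL.mp U h₀ ltα t a = F (GWL.color ltα t a) := by
        intro a
        have h : ∃ x : α, GWL.color ltα t x = GWL.color ltα t a := ⟨a, rfl⟩
        rw [hFdef]
        simp only [dif_pos h]
        exact ihαα a _ h.choose_spec.symm
      have hFβ : ∀ b : β, GWL.mp U h₀ ltβ t b = F (GWL.color ltβ t b) := by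
        intro b
        rw [hFdef]
        by_cases h : ∃ x : α, GWL.color ltα t x = GWL.color ltβ t b
        · simp only [dif_pos h]
          exact (ihαβ _ b h.choose_spec).symm
        · have h' : ∃ y : β, GWL.color ltβ t y = GWL.color ltβ t b := ⟨b, rfl⟩
          simp only [dif_neg h, dif_pos h']
          exact ihββ b _ h'.choose_spec.symm
      -- the feature at step t+1 as a function of the color at step t+1
      set G : GWLC t × Multiset (GWLC t) × Multiset (GWLC t) ×
          Multiset (GWLC t × GWLC t) × Multiset (GWLC t × GWLC t) → D :=
        fun c => U (F c.1) (c.2.1.map F) (c.2.2.1.map F)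
          (c.2.2.2.1.map (Prod.map F F)) (c.2.2.2.2.map (Prod.map F F)) with hGdef
      have expα : ∀ σ : α, GWL.mp U h₀ ltα (t + 1) σ = G (GWL.color ltα (t + 1) σ) := by
        intro σ
        rw [hGdef]
        show GWL.mp U h₀ ltα (t + 1) σ = U _ _ _ _ _
        simp only [GWL.mp, GWL.color, Multiset.map_map]
        congr 1
        · exact hFα σ
        · exact Multiset.map_congr rfl fun τ _ => hFα τ
        · exact Multiset.map_congr rfl fun τ _ => hFα τ
        · exact Multiset.map_congr rfl fun p _ => by
            simp [Function.comp, Prod.map, hFα p.1, hFα p.2]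
        · exact Multiset.map_congr rfl fun p _ => by
            simp [Function.comp, Prod.map, hFα p.1, hFα p.2]
      have expβ : ∀ σ : β, GWL.mp U h₀ ltβ (t + 1) σ = G (GWL.color ltβ (t + 1) σ) := by
        intro σ
        rw [hGdef]
        show GWL.mp U h₀ ltβ (t + 1) σ = U _ _ _ _ _
        simp only [GWL.mp, GWL.color, Multiset.map_map]
        congr 1
        · exact hFβ σ
        · exact Multiset.map_congr rfl fun τ _ => hFβ τ
        · exact Multiset.map_congr rfl fun τ _ => hFβ τ
        · exact Multiset.map_congr rfl fun p _ => by
            simp [Function.comp, Prod.map, hFβ p.1, hFβ p.2]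
        · exact Multiset.map_congr rfl fun p _ => by
            simp [Function.comp, Prod.map, hFβ p.1, hFβ p.2]
      refine ⟨fun σ σ' h => ?_, fun σ σ' h => ?_, fun σ σ' h => ?_⟩
      · rw [expα σ, expα σ', h]
      · rw [expβ σ, expβ σ', h]
      · rw [expα σ, expβ σ', h]
  -- Feature-from-color functions at every iteration, for the histogram statement.
  have hF : ∀ t : ℕ, ∃ F : GWLC t → D,
      (∀ a : α, GWL.mp U h₀ ltα t a = F (GWL.color ltα t a)) ∧
      (∀ b : β, GWL.mp U h₀ ltβ t b = F (GWL.color ltβ t b)) := by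
    intro t
    obtain ⟨kαα, kββ, kαβ⟩ := key t
    refine ⟨fun c =>
      if h : ∃ a : α, GWL.color ltα t a = c then GWL.mp U h₀ ltα t h.choose
      else if h' : ∃ b : β, GWL.color ltβ t b = c then GWL.mp U h₀ ltβ t h'.choose
      else h₀, fun a => ?_, fun b => ?_⟩
    · have h : ∃ x : α, GWL.color ltα t x = GWL.color ltα t a := ⟨a, rfl⟩
      simp only [dif_pos h]
      exact kαα a _ h.choose_spec.symm
    · by_cases h : ∃ x : α, GWL.color ltα t x = GWL.color ltβ t b
      · simp only [dif_pos h]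
        exact (kαβ _ b h.choose_spec).symm
      · have h' : ∃ y : β, GWL.color ltβ t y = GWL.color ltβ t b := ⟨b, rfl⟩
        simp only [dif_neg h, dif_pos h']
        exact kββ b _ h'.choose_spec.symm
  refine ⟨fun t σ σ' h => (key t).2.2 σ σ' h, fun hhist t => ?_⟩
  obtain ⟨F, hFα, hFβ⟩ := hF t
  have h1 : GWL.mpHist U h₀ ltα t = (GWL.hist ltα t).map F := by
    unfold GWL.mpHist GWL.hist
    rw [Multiset.map_map]
    exact Multiset.map_congr rfl fun a _ => hFα a
  have h2 : GWL.mpHist U h₀ ltβ t = (GWL.hist ltβ t).map F := by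
    unfold GWL.mpHist GWL.hist
    rw [Multiset.map_map]
    exact Multiset.map_congr rfl fun b _ => hFβ b
  rw [h1, h2, hhist t]
end

section
/- Let P and P' be finite graded posets, let c_t denote their GWL colorings, and let h_t denote the message-passing colorings induced by an update function U and initial value h₀ (the same for both posets). If U is injective, then for every t ∈ ℕ, every σ ∈ P and every σ' ∈ P': h_t(σ) = h_t(σ') if and only if c_t(σ) = c_t(σ'). Consequently, the histograms {{h_t(σ) : σ ∈ P}} and {{h_t(σ') : σ' ∈ P'}} agree for every t if and only if P and P' are GWL-equivalent; that is, a message-passing network with injective update has the same expressive power as the GWL test. -/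
namespace GWL

/-- Decode a GWL color into a feature value by structural recursion. -/
noncomputable def decode {D : Type}
    (U : D → Multiset D → Multiset D → Multiset (D × D) → Multiset (D × D) → D)
    (h₀ : D) : (t : ℕ) → GWLC t → D
  | 0, _ => h₀
  | t + 1, x => U (decode U h₀ t x.1)
      (x.2.1.map (decode U h₀ t))
      (x.2.2.1.map (decode U h₀ t))
      (x.2.2.2.1.map (Prod.map (decode U h₀ t) (decode U h₀ t)))
      (x.2.2.2.2.map (Prod.map (decode U h₀ t) (decode U h₀ t)))

theorem mp_eq_decode_color {α D : Type} [Fintype α]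
    (U : D → Multiset D → Multiset D → Multiset (D × D) → Multiset (D × D) → D)
    (h₀ : D) (lt : α → α → Prop) :
    ∀ (t : ℕ) (σ : α), mp U h₀ lt t σ = decode U h₀ t (color lt t σ) := by
  intro t
  induction t with
  | zero => intro σ; rfl
  | succ t ih =>
      intro σ
      have hb : ∀ s : Multiset α,
          s.map (mp U h₀ lt t) = (s.map (color lt t)).map (decode U h₀ t) := by
        intro s
        rw [Multiset.map_map]
        exact Multiset.map_congr rfl fun x _ => ih x
      have hp : ∀ s : Multiset (α × α),
          (s.map fun p => (mp U h₀ lt t p.1, mp U h₀ lt t p.2)) =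
            (s.map fun p => (color lt t p.1, color lt t p.2)).map
              (Prod.map (decode U h₀ t) (decode U h₀ t)) := by
        intro s
        rw [Multiset.map_map]
        exact Multiset.map_congr rfl fun x _ => by simp [Prod.map, ih]
      simp only [mp, color, decode]
      rw [ih σ, hb, hb, hp, hp]

theorem decode_injective {D : Type}
    (U : D → Multiset D → Multiset D → Multiset (D × D) → Multiset (D × D) → D)
    (h₀ : D)
    (hU : Function.Injective
      (fun x : D × Multiset D × Multiset D × Multiset (D × D) × Multiset (D × D) =>
        U x.1 x.2.1 x.2.2.1 x.2.2.2.1 x.2.2.2.2)) :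
    ∀ t : ℕ, Function.Injective (decode U h₀ t) := by
  intro t
  induction t with
  | zero =>
      intro x y _
      show x = y
      exact (show x = () from rfl).trans (show () = y from rfl)
  | succ t ih =>
      intro x y h
      simp only [decode] at h
      have hpm : Function.Injective (Prod.map (decode U h₀ t) (decode U h₀ t)) :=
        Function.Injective.prodMap ih ih
      have h' := @hU (decode U h₀ t x.1, Multiset.map (decode U h₀ t) x.2.1,
          Multiset.map (decode U h₀ t) x.2.2.1,
          Multiset.map (Prod.map (decode U h₀ t) (decode U h₀ t)) x.2.2.2.1,
          Multiset.map (Prod.map (decode U h₀ t) (decode U h₀ t)) x.2.2.2.2)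
        (decode U h₀ t y.1, Multiset.map (decode U h₀ t) y.2.1,
          Multiset.map (decode U h₀ t) y.2.2.1,
          Multiset.map (Prod.map (decode U h₀ t) (decode U h₀ t)) y.2.2.2.1,
          Multiset.map (Prod.map (decode U h₀ t) (decode U h₀ t)) y.2.2.2.2) h
      simp only [Prod.mk.injEq] at h'
      exact Prod.ext (ih h'.1) (Prod.ext (Multiset.map_injective ih h'.2.1)
        (Prod.ext (Multiset.map_injective ih h'.2.2.1)
        (Prod.ext (Multiset.map_injective hpm h'.2.2.2.1)
          (Multiset.map_injective hpm h'.2.2.2.2))))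

end GWL

/-- A message-passing network with an injective update function has exactly
the same expressive power as the GWL test: features agree iff GWL colors agree, and the
feature histograms agree at every iteration iff the posets are GWL-equivalent. -/
theorem injective_message_passing_same_power_as_gwl
    {α β D : Type} [Fintype α] [Fintype β]
    (ltα : α → α → Prop) (dimα : α → ℕ) (ltβ : β → β → Prop) (dimβ : β → ℕ)
    (hP : GWL.IsGradedPoset ltα dimα) (hP' : GWL.IsGradedPoset ltβ dimβ)
    (U : D → Multiset D → Multiset D → Multiset (D × D) → Multiset (D × D) → D)
    (h₀ : D)
    (hU : Function.Injective
      (fun x : D × Multiset D × Multiset D × Multiset (D × D) × Multiset (D × D) =>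
        U x.1 x.2.1 x.2.2.1 x.2.2.2.1 x.2.2.2.2)) :
    (∀ (t : ℕ) (σ : α) (σ' : β),
        GWL.mp U h₀ ltα t σ = GWL.mp U h₀ ltβ t σ' ↔ GWL.color ltα t σ = GWL.color ltβ t σ') ∧
    ((∀ t : ℕ, GWL.mpHist U h₀ ltα t = GWL.mpHist U h₀ ltβ t) ↔
        (∀ t : ℕ, GWL.hist ltα t = GWL.hist ltβ t)) := by
  constructor
  · intro t σ σ'
    rw [GWL.mp_eq_decode_color, GWL.mp_eq_decode_color]
    exact (GWL.decode_injective U h₀ hU t).eq_iff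
  · have key : ∀ {γ : Type} [Fintype γ] (lt : γ → γ → Prop) (t : ℕ),
        GWL.mpHist U h₀ lt t = (GWL.hist lt t).map (GWL.decode U h₀ t) := by
      intro γ _ lt t
      simp only [GWL.mpHist, GWL.hist, Multiset.map_map]
      exact Multiset.map_congr rfl fun x _ => GWL.mp_eq_decode_color U h₀ lt t x
    constructor
    · intro h t
      have := h t
      rw [key ltα t, key ltβ t] at this
      exact Multiset.map_injective (GWL.decode_injective U h₀ hU t) this
    · intro h t
      rw [key ltα t, key ltβ t, h t]
end

section
/- There exist hypergraphs H and H' that are HWL-equivalent but whose incidence posets I(H) and I(H') are not GWL-equivalent (in fact, already the histograms of the GWL colors c_1 on I(H) and I(H') differ). In particular, the I-CatWL test (GWL applied to incidence posets) is not less powerful than the HWL test. -/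
/-- A hypergraph `H = (V, E, f)`: finite vertex and edge sets together with a map assigning
to each hyperedge a nonempty set of vertices. -/
structure HyperGraph where
  V : Type
  E : Type
  [fintypeV : Fintype V]
  [fintypeE : Fintype E]
  [decEqV : DecidableEq V]
  [decEqE : DecidableEq E]
  f : E → Finset V
  nonempty : ∀ e, (f e).Nonempty

attribute [instance] HyperGraph.fintypeV HyperGraph.fintypeE
  HyperGraph.decEqV HyperGraph.decEqE

/-- The nested color domain of the hypergraph WL (HWL) test: a color at iteration `t+1` is
the previous color together with a multiset of previous colors of incident elements. -/
def HWLC : ℕ → Type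
  | 0 => Unit
  | t + 1 => HWLC t × Multiset (HWLC t)

/-- The HWL coloring of a hypergraph on the disjoint union `V ⊔ E`:
`d_{t+1}(v) = (d_t v, {{d_t e : v ∈ f e}})` and `d_{t+1}(e) = (d_t e, {{d_t v : v ∈ f e}})`. -/
noncomputable def hwl (H : HyperGraph) : (t : ℕ) → H.V ⊕ H.E → HWLC t
  | 0, _ => ()
  | t + 1, Sum.inl v =>
      (hwl H t (Sum.inl v),
       (Finset.univ.filter fun e => v ∈ H.f e).val.map fun e => hwl H t (Sum.inr e))
  | t + 1, Sum.inr e =>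
      (hwl H t (Sum.inr e), (H.f e).val.map fun v => hwl H t (Sum.inl v))

/-- The histogram of HWL colors over `V ⊔ E` at iteration `t`. -/
noncomputable def hwlHist (H : HyperGraph) (t : ℕ) : Multiset (HWLC t) :=
  Finset.univ.val.map (hwl H t)

/-- Two hypergraphs are HWL-equivalent if their HWL color histograms agree at every
iteration. -/
def HWLEquiv (H H' : HyperGraph) : Prop := ∀ t : ℕ, hwlHist H t = hwlHist H' t

/-- The strict order of the incidence poset `I(H)` on `V ⊔ E`: the only strict relations are
`v < e` for `v ∈ f e`. -/
def incLT (H : HyperGraph) : H.V ⊕ H.E → H.V ⊕ H.E → Prop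
  | Sum.inl v, Sum.inr e => v ∈ H.f e
  | _, _ => False

/-- The partial order of the incidence poset (the reflexive closure of `incLT`). -/
def incLE (H : HyperGraph) (x y : H.V ⊕ H.E) : Prop := x = y ∨ incLT H x y

/-- The dimension function of the incidence poset: `dim v = 0`, `dim e = 1`. -/
def incDim (H : HyperGraph) : H.V ⊕ H.E → ℕ
  | Sum.inl _ => 0
  | Sum.inr _ => 1

/-! Auxiliary material for the proof. -/

/-- `Hb`: one edge containing two vertices. -/
@[reducible]
def Hb : HyperGraph where
  V := Fin 2
  E := Fin 1
  f := fun _ => Finset.univ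
  nonempty := fun _ => Finset.univ_nonempty

/-- `Hb'`: two edges, each containing the unique vertex. -/
@[reducible]
def Hb' : HyperGraph where
  V := Fin 1
  E := Fin 2
  f := fun _ => Finset.univ
  nonempty := fun _ => Finset.univ_nonempty

lemma covers_iff (H : HyperGraph) (τ σ : H.V ⊕ H.E) :
    GWL.Covers (incLT H) τ σ ↔ incLT H τ σ := by
  constructor
  · exact fun h => h.1
  · intro h
    refine ⟨h, ?_⟩
    rintro ⟨q, hq1, hq2⟩
    rcases τ with τ | τ <;> rcases q with q | q <;> rcases σ with σ | σ <;>
      first | exact hq1 | exact hq2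

instance incLT.decidable (H : HyperGraph) (x y : H.V ⊕ H.E) : Decidable (incLT H x y) :=
  match x, y with
  | Sum.inl v, Sum.inr e => inferInstanceAs (Decidable (v ∈ H.f e))
  | Sum.inl _, Sum.inl _ => isFalse (fun h => h)
  | Sum.inr _, Sum.inl _ => isFalse (fun h => h)
  | Sum.inr _, Sum.inr _ => isFalse (fun h => h)

lemma boundary_eq (H : HyperGraph) (σ : H.V ⊕ H.E) :
    GWL.boundary (incLT H) σ = Finset.univ.filter (fun τ => incLT H τ σ) := by
  ext τ; simp [GWL.boundary, covers_iff]

lemma coboundary_eq (H : HyperGraph) (σ : H.V ⊕ H.E) :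
    GWL.coboundary (incLT H) σ = Finset.univ.filter (fun τ => incLT H σ τ) := by
  ext τ; simp [GWL.coboundary, covers_iff]

lemma lowerAdj_eq (H : HyperGraph) (σ : H.V ⊕ H.E) :
    GWL.lowerAdj (incLT H) σ = Finset.univ.filter
      (fun p => incLT H p.2 σ ∧ incLT H p.2 p.1 ∧ p.1 ≠ σ) := by
  ext p; simp [GWL.lowerAdj, covers_iff]

lemma upperAdj_eq (H : HyperGraph) (σ : H.V ⊕ H.E) :
    GWL.upperAdj (incLT H) σ = Finset.univ.filter
      (fun p => incLT H σ p.2 ∧ incLT H p.1 p.2 ∧ p.1 ≠ σ) := by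
  ext p; simp [GWL.upperAdj, covers_iff]

lemma color_one {α : Type} [Fintype α] (lt : α → α → Prop) (σ : α) :
    GWL.color lt 1 σ =
      ((), Multiset.replicate (GWL.boundary lt σ).card (),
        Multiset.replicate (GWL.coboundary lt σ).card (),
        Multiset.replicate (GWL.lowerAdj lt σ).card ((), ()),
        Multiset.replicate (GWL.upperAdj lt σ).card ((), ())) := by
  show (GWL.color lt 0 σ,
      (GWL.boundary lt σ).val.map (GWL.color lt 0),
      (GWL.coboundary lt σ).val.map (GWL.color lt 0),
      (GWL.lowerAdj lt σ).val.map (fun p => (GWL.color lt 0 p.1, GWL.color lt 0 p.2)),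
      (GWL.upperAdj lt σ).val.map (fun p => (GWL.color lt 0 p.1, GWL.color lt 0 p.2))) = _
  have h0 : GWL.color lt 0 = fun _ : α => () := rfl
  rw [h0]
  simp only [Multiset.map_const']
  erw [Multiset.map_const', Multiset.map_const']
  rfl

instance : DecidableEq (GWLC 0) := inferInstanceAs (DecidableEq Unit)
instance : DecidableEq (GWLC 1) := instDecidableEqProd

lemma key_hwl : ∀ t, (∀ (v : Fin 2) (e : Fin 2),
      hwl Hb t (Sum.inl v) = hwl Hb' t (Sum.inr e)) ∧
    hwl Hb t (Sum.inr (0 : Fin 1)) = hwl Hb' t (Sum.inl (0 : Fin 1)) := by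
  intro t
  induction t with
  | zero => exact ⟨fun _ _ => rfl, rfl⟩
  | succ t ih =>
    have hu1 : (Finset.univ : Finset (Fin 1)).val = {0} := rfl
    have hu2 : (Finset.univ : Finset (Fin 2)).val = {0, 1} := rfl
    constructor
    · intro v e
      show (hwl Hb t (Sum.inl v),
          ((Finset.univ : Finset (Fin 1)).filter fun x => v ∈ Hb.f x).val.map
            (fun x => hwl Hb t (Sum.inr x)))
        = (hwl Hb' t (Sum.inr e),
          (Hb'.f e).val.map (fun x => hwl Hb' t (Sum.inl x)))
      have hfil : (Finset.univ : Finset (Fin 1)).filter (fun x => v ∈ Hb.f x)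
          = Finset.univ :=
        Finset.filter_true_of_mem (fun x _ => Finset.mem_univ v)
      rw [hfil]
      have hfe : (Hb'.f e).val = {(0 : Fin 1)} := rfl
      rw [hfe]
      simp only [Multiset.map_singleton]
      rw [ih.1 v e, ih.2]
    · show (hwl Hb t (Sum.inr (0 : Fin 1)),
          (Hb.f (0 : Fin 1)).val.map (fun x => hwl Hb t (Sum.inl x)))
        = (hwl Hb' t (Sum.inl (0 : Fin 1)),
          ((Finset.univ : Finset (Fin 2)).filter
            fun x => (0 : Fin 1) ∈ Hb'.f x).val.map (fun x => hwl Hb' t (Sum.inr x)))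
      have hfil : (Finset.univ : Finset (Fin 2)).filter (fun x => (0 : Fin 1) ∈ Hb'.f x)
          = Finset.univ :=
        Finset.filter_true_of_mem (fun x _ => Finset.mem_univ (0 : Fin 1))
      rw [hfil]
      have hf0 : (Hb.f (0 : Fin 1)).val = ({0, 1} : Multiset (Fin 2)) := rfl
      rw [hf0]
      simp only [Multiset.insert_eq_cons, Multiset.map_cons, Multiset.map_singleton]
      rw [ih.1 0 0, ih.1 1 1, ih.2]

lemma hwl_equiv : HWLEquiv Hb Hb' := by
  intro t
  have h := key_hwl t
  have hu : (Finset.univ : Finset (Hb.V ⊕ Hb.E)).val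
      = {Sum.inl (0 : Fin 2), Sum.inl (1 : Fin 2), Sum.inr (0 : Fin 1)} := by decide
  have hu' : (Finset.univ : Finset (Hb'.V ⊕ Hb'.E)).val
      = {Sum.inl (0 : Fin 1), Sum.inr (0 : Fin 2), Sum.inr (1 : Fin 2)} := by decide
  show (Finset.univ : Finset (Hb.V ⊕ Hb.E)).val.map (hwl Hb t)
      = (Finset.univ : Finset (Hb'.V ⊕ Hb'.E)).val.map (hwl Hb' t)
  rw [hu, hu']
  simp only [Multiset.insert_eq_cons, Multiset.map_cons, Multiset.map_singleton]
  rw [h.1 0 0, h.1 1 1, h.2]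
  change _ ::ₘ _ ::ₘ _ ::ₘ 0 = _ ::ₘ _ ::ₘ _ ::ₘ 0
  rw [Multiset.cons_swap (hwl Hb' t (Sum.inr (1 : Fin 2))) (hwl Hb' t (Sum.inl (0 : Fin 1))),
    Multiset.cons_swap (hwl Hb' t (Sum.inr (0 : Fin 2))) (hwl Hb' t (Sum.inl (0 : Fin 1)))]

lemma hist_b : GWL.hist (incLT Hb) 1 =
    ({((), 0, {()}, 0, {((),())}), ((), 0, {()}, 0, {((),())}),
      ((), {(),()}, (0 : Multiset Unit), (0 : Multiset (Unit × Unit)),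
        (0 : Multiset (Unit × Unit)))} : Multiset (GWLC 1)) := by
  have c0 : GWL.color (incLT Hb) 1 (Sum.inl (0 : Fin 2)) =
      (((), 0, {()}, 0, {((),())}) : GWLC 1) := by
    rw [color_one, boundary_eq, coboundary_eq, lowerAdj_eq, upperAdj_eq]
    exact @of_decide_eq_true _ (instDecidableEqGWLCOfNatNat_1 _ _) rfl
  have c1 : GWL.color (incLT Hb) 1 (Sum.inl (1 : Fin 2)) =
      (((), 0, {()}, 0, {((),())}) : GWLC 1) := by
    rw [color_one, boundary_eq, coboundary_eq, lowerAdj_eq, upperAdj_eq]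
    exact @of_decide_eq_true _ (instDecidableEqGWLCOfNatNat_1 _ _) rfl
  have c2 : GWL.color (incLT Hb) 1 (Sum.inr (0 : Fin 1)) =
      (((), {(),()}, (0 : Multiset Unit), (0 : Multiset (Unit × Unit)),
        (0 : Multiset (Unit × Unit))) : GWLC 1) := by
    rw [color_one, boundary_eq, coboundary_eq, lowerAdj_eq, upperAdj_eq]
    exact @of_decide_eq_true _ (instDecidableEqGWLCOfNatNat_1 _ _) rfl
  have hu : (Finset.univ : Finset (Hb.V ⊕ Hb.E)).val
      = {Sum.inl (0 : Fin 2), Sum.inl (1 : Fin 2), Sum.inr (0 : Fin 1)} := by decide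
  show (Finset.univ : Finset (Hb.V ⊕ Hb.E)).val.map (GWL.color (incLT Hb) 1) = _
  rw [hu]
  simp only [Multiset.insert_eq_cons, Multiset.map_cons, Multiset.map_singleton]
  rw [c0, c1, c2]
  rfl

lemma hist_b' : GWL.hist (incLT Hb') 1 =
    ({((), 0, {(),()}, (0 : Multiset (Unit × Unit)), (0 : Multiset (Unit × Unit))),
      ((), {()}, (0 : Multiset Unit), {((),())}, (0 : Multiset (Unit × Unit))),
      ((), {()}, (0 : Multiset Unit), {((),())}, (0 : Multiset (Unit × Unit)))}
      : Multiset (GWLC 1)) := by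
  have c0 : GWL.color (incLT Hb') 1 (Sum.inl (0 : Fin 1)) =
      (((), 0, {(),()}, (0 : Multiset (Unit × Unit)), (0 : Multiset (Unit × Unit)))
        : GWLC 1) := by
    rw [color_one, boundary_eq, coboundary_eq, lowerAdj_eq, upperAdj_eq]
    exact @of_decide_eq_true _ (instDecidableEqGWLCOfNatNat_1 _ _) rfl
  have c1 : GWL.color (incLT Hb') 1 (Sum.inr (0 : Fin 2)) =
      (((), {()}, (0 : Multiset Unit), {((),())}, (0 : Multiset (Unit × Unit)))
        : GWLC 1) := by
    rw [color_one, boundary_eq, coboundary_eq, lowerAdj_eq, upperAdj_eq]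
    exact @of_decide_eq_true _ (instDecidableEqGWLCOfNatNat_1 _ _) rfl
  have c2 : GWL.color (incLT Hb') 1 (Sum.inr (1 : Fin 2)) =
      (((), {()}, (0 : Multiset Unit), {((),())}, (0 : Multiset (Unit × Unit)))
        : GWLC 1) := by
    rw [color_one, boundary_eq, coboundary_eq, lowerAdj_eq, upperAdj_eq]
    exact @of_decide_eq_true _ (instDecidableEqGWLCOfNatNat_1 _ _) rfl
  have hu : (Finset.univ : Finset (Hb'.V ⊕ Hb'.E)).val
      = {Sum.inl (0 : Fin 1), Sum.inr (0 : Fin 2), Sum.inr (1 : Fin 2)} := by decide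
  show (Finset.univ : Finset (Hb'.V ⊕ Hb'.E)).val.map (GWL.color (incLT Hb') 1) = _
  rw [hu]
  simp only [Multiset.insert_eq_cons, Multiset.map_cons, Multiset.map_singleton]
  rw [c0, c1, c2]
  rfl

lemma gwl_hist_ne : GWL.hist (incLT Hb) 1 ≠ GWL.hist (incLT Hb') 1 := by
  rw [hist_b, hist_b']
  decide

/-- There exist hypergraphs that are HWL-equivalent but whose incidence
posets are distinguished by GWL (already at iteration 1); hence the `I`-CatWL test is not
less powerful than HWL. -/
theorem ICatWL_not_less_powerful_than_HWL :
    ∃ H H' : HyperGraph, HWLEquiv H H' ∧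
      GWL.hist (incLT H) 1 ≠ GWL.hist (incLT H') 1 ∧
      ¬ (∀ t : ℕ, GWL.hist (incLT H) t = GWL.hist (incLT H') t) := by
  exact ⟨Hb, Hb', hwl_equiv, gwl_hist_ne, fun hall => gwl_hist_ne (hall 1)⟩
end

section
/- Let P and P' be finite graded posets in which every element of positive dimension has at least two boundary elements. Let a_t denote the GWL coloring (using all four adjacencies) and b_t the GWL_{B,↓,↑} coloring (omitting the coboundary multiset). Then for every t ∈ ℕ, σ ∈ P and σ' ∈ P': b_{t+1}(σ) = b_{t+1}(σ') implies a_t(σ) = a_t(σ'); conversely a_t(σ) = a_t(σ') implies b_t(σ) = b_t(σ'). Consequently, P and P' are GWL-equivalent if and only if they are GWL_{B,↓,↑}-equivalent: the two tests have the same expressive power on such posets. -/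
/-- Color domain for the `GWL_{B,↓,↑}` variant (coboundary omitted). -/
def GWLC3 : ℕ → Type
  | 0 => Unit
  | t + 1 => GWLC3 t × Multiset (GWLC3 t) ×
      Multiset (GWLC3 t × GWLC3 t) × Multiset (GWLC3 t × GWLC3 t)

/-- Color domain for the `GWL_{B,↑}` variant (only boundary and upper adjacency). -/
def GWLC2 : ℕ → Type
  | 0 => Unit
  | t + 1 => GWLC2 t × Multiset (GWLC2 t) × Multiset (GWLC2 t × GWLC2 t)

namespace GWL

variable {α : Type} [Fintype α]

/-- The `GWL_{B,↓,↑}` coloring: like GWL but with the coboundary multiset omitted. -/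
noncomputable def colorBDU (lt : α → α → Prop) : (t : ℕ) → α → GWLC3 t
  | 0, _ => ()
  | t + 1, σ =>
      (colorBDU lt t σ,
       (boundary lt σ).val.map (colorBDU lt t),
       (lowerAdj lt σ).val.map (fun p => (colorBDU lt t p.1, colorBDU lt t p.2)),
       (upperAdj lt σ).val.map (fun p => (colorBDU lt t p.1, colorBDU lt t p.2)))

/-- The `GWL_{B,↑}` coloring: like GWL but keeping only the boundary and upper-adjacency
multisets. -/
noncomputable def colorBU (lt : α → α → Prop) : (t : ℕ) → α → GWLC2 t
  | 0, _ => ()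
  | t + 1, σ =>
      (colorBU lt t σ,
       (boundary lt σ).val.map (colorBU lt t),
       (upperAdj lt σ).val.map (fun p => (colorBU lt t p.1, colorBU lt t p.2)))

/-- Histogram of `GWL_{B,↓,↑}` colors. -/
noncomputable def histBDU (lt : α → α → Prop) (t : ℕ) : Multiset (GWLC3 t) :=
  Finset.univ.val.map (colorBDU lt t)

/-- Histogram of `GWL_{B,↑}` colors. -/
noncomputable def histBU (lt : α → α → Prop) (t : ℕ) : Multiset (GWLC2 t) :=
  Finset.univ.val.map (colorBU lt t)

end GWL


noncomputable def GWLrecon {γ : Type} [DecidableEq γ] (S : Multiset γ) (w : γ → ℕ) :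
    Multiset γ :=
  S.toFinset.sum fun x => Multiset.replicate (S.count x / (w x - 1)) x

lemma GWLrecon_count {γ : Type} [DecidableEq γ] (S : Multiset γ) (w : γ → ℕ) (x : γ) :
    (GWLrecon S w).count x = if x ∈ S.toFinset then S.count x / (w x - 1) else 0 := by
  rw [GWLrecon, Multiset.count_sum']
  simp only [Multiset.count_replicate]
  exact Finset.sum_ite_eq' S.toFinset x fun y => S.count y / (w y - 1)

noncomputable def GWLPhi : (t : ℕ) → GWLC3 (t + 1) → GWLC t
  | 0, _ => ()
  | t + 1, x =>
      (GWLPhi t x.1, x.2.1.map (GWLPhi t),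
       (@GWLrecon _ (Classical.decEq _) (x.2.2.2.map Prod.snd) (fun y => y.2.1.card)).map
         (GWLPhi t),
       x.2.2.1.map (fun p => (GWLPhi t p.1, GWLPhi t p.2)),
       x.2.2.2.map (fun p => (GWLPhi t p.1, GWLPhi t p.2)))

noncomputable def GWLPsi : (t : ℕ) → GWLC t → GWLC3 t
  | 0, x => x
  | t + 1, x =>
      (GWLPsi t x.1, x.2.1.map (GWLPsi t),
       x.2.2.2.1.map (fun p => (GWLPsi t p.1, GWLPsi t p.2)),
       x.2.2.2.2.map (fun p => (GWLPsi t p.1, GWLPsi t p.2)))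

namespace GWL

variable {α : Type} [Fintype α]

lemma card_snd_colorBDU (lt : α → α → Prop) (t : ℕ) (τ : α) :
    Multiset.card (colorBDU lt (t + 1) τ).2.1 = (boundary lt τ).card := by
  simp [colorBDU]

lemma S_count (lt : α → α → Prop) (dim : α → ℕ) (h : IsGradedPoset lt dim)
    (t : ℕ) (σ : α) [DecidableEq (GWLC3 (t + 1))] (x : GWLC3 (t + 1)) :
    ((upperAdj lt σ).val.map fun p => colorBDU lt (t + 1) p.2).count x
      = (Multiset.card x.2.1 - 1) *
        ((coboundary lt σ).val.map (colorBDU lt (t + 1))).count x := by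
  classical
  rw [Multiset.count_map, Multiset.count_map, ← Finset.filter_val, ← Finset.filter_val]
  show ((upperAdj lt σ).filter fun p => x = colorBDU lt (t + 1) p.2).card
      = (Multiset.card x.2.1 - 1) *
        ((coboundary lt σ).filter fun τ => x = colorBDU lt (t + 1) τ).card
  set A := (upperAdj lt σ).filter fun p => x = colorBDU lt (t + 1) p.2 with hA
  set B := (coboundary lt σ).filter fun τ => x = colorBDU lt (t + 1) τ with hB
  have hmap : ∀ p ∈ A, p.2 ∈ B := by
    intro p hp
    simp only [hA, hB, upperAdj, coboundary, Finset.mem_filter, Finset.mem_univ,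
      true_and] at hp ⊢
    exact ⟨hp.1.1, hp.2⟩
  rw [Finset.card_eq_sum_card_fiberwise hmap]
  have hfib : ∀ τ ∈ B, (A.filter fun p => p.2 = τ).card = Multiset.card x.2.1 - 1 := by
    intro τ hτ
    have hτ' := Finset.mem_filter.mp hτ
    have hcov : Covers lt σ τ := by
      have := hτ'.1
      simpa [coboundary] using this
    have hστ : σ ∈ boundary lt τ := by simp [boundary, hcov]
    have him : A.filter (fun p => p.2 = τ)
        = ((boundary lt τ).erase σ).image (fun s => (s, τ)) := by
      ext p
      simp only [hA, Finset.mem_filter, Finset.mem_image, Finset.mem_erase,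
        upperAdj, boundary, Finset.mem_univ, true_and]
      constructor
      · rintro ⟨⟨⟨h1, h2, h3⟩, h4⟩, h5⟩
        exact ⟨p.1, ⟨h3, h5 ▸ h2⟩, Prod.ext rfl h5.symm⟩
      · rintro ⟨s, ⟨hs1, hs2⟩, rfl⟩
        exact ⟨⟨⟨hcov, hs2, hs1⟩, hτ'.2⟩, rfl⟩
    rw [him, Finset.card_image_of_injective _ (fun a b hab => (Prod.mk.injEq _ _ _ _ ▸ hab).1),
      Finset.card_erase_of_mem hστ, hτ'.2, card_snd_colorBDU]
  rw [Finset.sum_congr rfl hfib, Finset.sum_const, smul_eq_mul, mul_comm]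

end GWL

namespace GWL

variable {α : Type} [Fintype α]

lemma recon_upper (lt : α → α → Prop) (dim : α → ℕ) (h : IsGradedPoset lt dim)
    (hb : ∀ σ : α, 0 < dim σ → 2 ≤ (boundary lt σ).card)
    (t : ℕ) (σ : α) [DecidableEq (GWLC3 (t + 1))] :
    GWLrecon ((upperAdj lt σ).val.map fun p => colorBDU lt (t + 1) p.2)
        (fun y => Multiset.card y.2.1)
      = (coboundary lt σ).val.map (colorBDU lt (t + 1)) := by
  set S := (upperAdj lt σ).val.map fun p => colorBDU lt (t + 1) p.2 with hS
  set T := (coboundary lt σ).val.map (colorBDU lt (t + 1)) with hT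
  have hw : ∀ x, T.count x ≠ 0 → 2 ≤ Multiset.card x.2.1 := by
    intro x hx
    obtain ⟨τ, hτ, rfl⟩ := Multiset.mem_map.mp (Multiset.count_pos.mp (Nat.pos_of_ne_zero hx))
    have hcov : Covers lt σ τ := by simpa [coboundary] using hτ
    have hdim : 0 < dim τ := by rw [h.cover σ τ hcov]; omega
    rw [card_snd_colorBDU]
    exact hb τ hdim
  have hSc : ∀ x, S.count x = (Multiset.card x.2.1 - 1) * T.count x :=
    fun x => S_count lt dim h t σ x
  refine Multiset.ext.mpr fun x => ?_
  rw [GWLrecon_count]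
  by_cases hmem : x ∈ S.toFinset
  · simp only [hmem, if_true, hSc x]
    have hpos : 0 < S.count x := Multiset.count_pos.mpr (Multiset.mem_toFinset.mp hmem)
    rw [hSc x] at hpos
    have h1 : Multiset.card x.2.1 - 1 ≠ 0 := by
      intro h0; rw [h0, zero_mul] at hpos; exact absurd hpos (lt_irrefl 0)
    rw [Nat.mul_div_cancel_left _ (Nat.pos_of_ne_zero h1)]
  · simp only [hmem, if_false]
    by_contra hne
    have hTpos : T.count x ≠ 0 := fun h0 => hne h0.symm
    have h2 := hw x hTpos
    have : S.count x ≠ 0 := by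
      rw [hSc x]
      exact Nat.mul_ne_zero (by omega) hTpos
    exact hmem (Multiset.mem_toFinset.mpr (Multiset.count_pos.mp (Nat.pos_of_ne_zero this)))

lemma Phi_color (lt : α → α → Prop) (dim : α → ℕ) (h : IsGradedPoset lt dim)
    (hb : ∀ σ : α, 0 < dim σ → 2 ≤ (boundary lt σ).card) :
    ∀ (t : ℕ) (σ : α), GWLPhi t (colorBDU lt (t + 1) σ) = color lt t σ := by
  intro t
  induction t with
  | zero => intro σ; rfl
  | succ t IH =>
    intro σ
    show GWLPhi (t + 1) (colorBDU lt (t + 2) σ) = color lt (t + 1) σ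
    rw [GWLPhi, colorBDU, color]
    simp only [Multiset.map_map]
    refine congrArg₂ Prod.mk (IH σ) (congrArg₂ Prod.mk ?_ (congrArg₂ Prod.mk ?_
      (congrArg₂ Prod.mk ?_ ?_)))
    · exact Multiset.map_congr rfl fun τ _ => IH τ
    · have : Multiset.map (Prod.snd ∘ fun p =>
            (colorBDU lt (t + 1) p.1, colorBDU lt (t + 1) p.2)) (upperAdj lt σ).val
          = (upperAdj lt σ).val.map fun p => colorBDU lt (t + 1) p.2 := rfl
      rw [this, @recon_upper _ _ lt dim h hb t σ (Classical.decEq _), Multiset.map_map]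
      exact Multiset.map_congr rfl fun τ _ => IH τ
    · exact Multiset.map_congr rfl fun p _ => by simp [IH p.1, IH p.2]
    · exact Multiset.map_congr rfl fun p _ => by simp [IH p.1, IH p.2]

lemma Psi_color (lt : α → α → Prop) :
    ∀ (t : ℕ) (σ : α), GWLPsi t (color lt t σ) = colorBDU lt t σ := by
  intro t
  induction t with
  | zero => intro σ; rfl
  | succ t IH =>
    intro σ
    show GWLPsi (t + 1) (color lt (t + 1) σ) = colorBDU lt (t + 1) σ
    rw [GWLPsi, colorBDU, color]
    simp only [Multiset.map_map]
    refine congrArg₂ Prod.mk (IH σ) (congrArg₂ Prod.mk ?_ (congrArg₂ Prod.mk ?_ ?_))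
    · exact Multiset.map_congr rfl fun τ _ => IH τ
    · exact Multiset.map_congr rfl fun p _ => by simp [IH p.1, IH p.2]
    · exact Multiset.map_congr rfl fun p _ => by simp [IH p.1, IH p.2]

end GWL

/-- On finite graded posets in which every element of positive dimension
has at least two boundary elements, the GWL test (all four adjacencies, coloring `a_t`) and
the `GWL_{B,↓,↑}` test (coboundary omitted, coloring `b_t`) have the same expressive power:
`b_{t+1}` refines `a_t`, `a_t` refines `b_t`, and the two notions of equivalence of the two
posets coincide. -/
theorem gwl_equiv_gwlBDU
    {α β : Type} [Fintype α] [Fintype β]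
    (ltα : α → α → Prop) (dimα : α → ℕ) (ltβ : β → β → Prop) (dimβ : β → ℕ)
    (hP : GWL.IsGradedPoset ltα dimα) (hP' : GWL.IsGradedPoset ltβ dimβ)
    (hbα : ∀ σ : α, 0 < dimα σ → 2 ≤ (GWL.boundary ltα σ).card)
    (hbβ : ∀ σ : β, 0 < dimβ σ → 2 ≤ (GWL.boundary ltβ σ).card) :
    (∀ (t : ℕ) (σ : α) (σ' : β),
        GWL.colorBDU ltα (t + 1) σ = GWL.colorBDU ltβ (t + 1) σ' →
        GWL.color ltα t σ = GWL.color ltβ t σ') ∧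
    (∀ (t : ℕ) (σ : α) (σ' : β),
        GWL.color ltα t σ = GWL.color ltβ t σ' →
        GWL.colorBDU ltα t σ = GWL.colorBDU ltβ t σ') ∧
    ((∀ t : ℕ, GWL.hist ltα t = GWL.hist ltβ t) ↔
        (∀ t : ℕ, GWL.histBDU ltα t = GWL.histBDU ltβ t)) := by
  
  have PhiA := GWL.Phi_color ltα dimα hP hbα
  have PhiB := GWL.Phi_color ltβ dimβ hP' hbβ
  have PsiA := GWL.Psi_color (α := α) ltα
  have PsiB := GWL.Psi_color (α := β) ltβ
  refine ⟨?_, ?_, ?_⟩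
  · intro t σ σ' hcol
    rw [← PhiA t σ, ← PhiB t σ', hcol]
  · intro t σ σ' hcol
    rw [← PsiA t σ, ← PsiB t σ', hcol]
  · constructor
    · intro H t
      have hα : GWL.histBDU ltα t = (GWL.hist ltα t).map (GWLPsi t) := by
        simp only [GWL.hist, GWL.histBDU, Multiset.map_map]
        exact Multiset.map_congr rfl fun σ _ => (PsiA t σ).symm
      have hβ : GWL.histBDU ltβ t = (GWL.hist ltβ t).map (GWLPsi t) := by
        simp only [GWL.hist, GWL.histBDU, Multiset.map_map]
        exact Multiset.map_congr rfl fun σ _ => (PsiB t σ).symm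
      rw [hα, hβ, H t]
    · intro H t
      have hα : GWL.hist ltα t = (GWL.histBDU ltα (t + 1)).map (GWLPhi t) := by
        simp only [GWL.hist, GWL.histBDU, Multiset.map_map]
        exact Multiset.map_congr rfl fun σ _ => (PhiA t σ).symm
      have hβ : GWL.hist ltβ t = (GWL.histBDU ltβ (t + 1)).map (GWLPhi t) := by
        simp only [GWL.hist, GWL.histBDU, Multiset.map_map]
        exact Multiset.map_congr rfl fun σ _ => (PhiB t σ).symm
      rw [hα, hβ, H (t + 1)]
end

section
/- Let P and P' be finite graded posets in which every element of positive dimension has at least two boundary elements. Let a_t denote the GWL coloring (using all four adjacencies) and b_t the GWL_{B,↑} coloring (keeping only the boundary and upper-adjacency multisets). Then for every t ∈ ℕ, σ ∈ P and σ' ∈ P': b_{2t+1}(σ) = b_{2t+1}(σ') implies a_t(σ) = a_t(σ'); conversely a_t(σ) = a_t(σ') implies b_t(σ) = b_t(σ'). Consequently, P and P' are GWL-equivalent if and only if they are GWL_{B,↑}-equivalent: the two tests have the same expressive power on such posets. -/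
namespace GWL

open Multiset

section Tools

/-- Transfer a multiset-of-images equality along a pointwise implication. -/
theorem map_congr_of_map_eq {γ δ ε ε' : Type*} {s : Multiset γ} {t : Multiset δ}
    {f : γ → ε} {g : δ → ε} {f' : γ → ε'} {g' : δ → ε'}
    (h : s.map f = t.map g)
    (H : ∀ x ∈ s, ∀ y ∈ t, f x = g y → f' x = g' y) :
    s.map f' = t.map g' := by
  rw [← Multiset.rel_eq] at h ⊢
  rw [Multiset.rel_map] at h ⊢
  exact h.mono H

theorem bind_congr_of_map_eq {γ δ ε ε' : Type*} {s : Multiset γ} {t : Multiset δ}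
    {f : γ → ε} {g : δ → ε} {F : γ → Multiset ε'} {G : δ → Multiset ε'}
    (h : s.map f = t.map g)
    (H : ∀ x ∈ s, ∀ y ∈ t, f x = g y → F x = G y) :
    s.bind F = t.bind G := by
  rw [← Multiset.rel_eq, Multiset.rel_map] at h
  have h2 := h.mono H
  clear h H
  induction h2 with
  | zero => simp
  | cons hfg _ ih => simp [Multiset.cons_bind, hfg, ih]

theorem count_bind_replicate {γ : Type*} [DecidableEq γ] (m : Multiset γ) (n : γ → ℕ) (c : γ) :
    (m.bind fun d => Multiset.replicate (n d) d).count c = n c * m.count c := by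
  induction m using Multiset.induction with
  | empty => simp
  | cons a s ih =>
    rw [Multiset.cons_bind, Multiset.count_add, ih, Multiset.count_cons,
      Multiset.count_replicate]
    by_cases hca : c = a
    · subst hca; simp [Nat.mul_add]; omega
    · simp [hca, Ne.symm hca]

theorem bind_replicate_injective {γ : Type*} {m m' : Multiset γ} {n : γ → ℕ}
    (hm : ∀ c ∈ m, 1 ≤ n c) (hm' : ∀ c ∈ m', 1 ≤ n c)
    (h : m.bind (fun d => Multiset.replicate (n d) d)
        = m'.bind (fun d => Multiset.replicate (n d) d)) :
    m = m' := by
  classical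
  ext c
  have hc := congrArg (Multiset.count c) h
  rw [count_bind_replicate, count_bind_replicate] at hc
  by_cases h1 : c ∈ m
  · have hn := hm c h1
    exact Nat.eq_of_mul_eq_mul_left (by omega) hc
  · rw [Multiset.count_eq_zero_of_notMem h1] at hc ⊢
    by_cases h2 : c ∈ m'
    · have hn := hm' c h2
      have := Multiset.count_pos.2 h2
      nlinarith [hc.symm]
    · rw [Multiset.count_eq_zero_of_notMem h2]

end Tools

section OnePoset

variable {α : Type} [Fintype α] {lt : α → α → Prop} {dim : α → ℕ}

theorem mem_boundary {σ τ : α} : τ ∈ boundary lt σ ↔ Covers lt τ σ := by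
  classical simp [boundary]

theorem mem_coboundary {σ τ : α} : τ ∈ coboundary lt σ ↔ Covers lt σ τ := by
  classical simp [coboundary]

theorem mem_upperAdj {σ : α} {p : α × α} :
    p ∈ upperAdj lt σ ↔ Covers lt σ p.2 ∧ Covers lt p.1 p.2 ∧ p.1 ≠ σ := by
  classical simp [upperAdj]

theorem mem_lowerAdj {σ : α} {p : α × α} :
    p ∈ lowerAdj lt σ ↔ Covers lt p.2 σ ∧ Covers lt p.2 p.1 ∧ p.1 ≠ σ := by
  classical simp [lowerAdj]

open Classical in
theorem upperAdj_val (lt : α → α → Prop) (σ : α) :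
    (upperAdj lt σ).val = (coboundary lt σ).val.bind
      (fun τ => ((boundary lt τ).erase σ).val.map (fun x => (x, τ))) := by
  classical
  have hdisj : ((coboundary lt σ : Finset α) : Set α).PairwiseDisjoint
      (fun τ => ((boundary lt τ).erase σ).map
        ⟨fun x => (x, τ), fun a b hab => congrArg Prod.fst hab⟩) := by
    intro τ1 _ τ2 _ hne
    rw [Function.onFun, Finset.disjoint_left]
    rintro ⟨x, τ⟩ hx1 hx2
    simp only [Finset.mem_map, Function.Embedding.coeFn_mk, Prod.mk.injEq] at hx1 hx2
    obtain ⟨a, -, -, rfl⟩ := hx1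
    obtain ⟨b, -, h2⟩ := hx2
    exact hne (congrArg Prod.snd h2).symm
  have h : upperAdj lt σ = (coboundary lt σ).disjiUnion
      (fun τ => ((boundary lt τ).erase σ).map
        ⟨fun x => (x, τ), fun a b hab => congrArg Prod.fst hab⟩) hdisj := by
    ext ⟨x, τ⟩
    simp only [mem_upperAdj, Finset.mem_disjiUnion, Finset.mem_map,
      Function.Embedding.coeFn_mk, Finset.mem_erase, mem_coboundary, mem_boundary,
      Prod.mk.injEq]
    constructor
    · rintro ⟨h1, h2, h3⟩
      exact ⟨τ, h1, x, ⟨h3, h2⟩, rfl⟩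
    · rintro ⟨τ', hτ', a, ⟨ha1, ha2⟩, rfl, rfl⟩
      exact ⟨hτ', ha2, ha1⟩
  rw [h, Finset.disjiUnion_val]
  apply Multiset.bind_congr
  intro τ _
  rw [Finset.map_val]
  rfl

open Classical in
theorem lowerAdj_val (lt : α → α → Prop) (σ : α) :
    (lowerAdj lt σ).val = (boundary lt σ).val.bind
      (fun τ => ((coboundary lt τ).erase σ).val.map (fun x => (x, τ))) := by
  classical
  have hdisj : ((boundary lt σ : Finset α) : Set α).PairwiseDisjoint
      (fun τ => ((coboundary lt τ).erase σ).map
        ⟨fun x => (x, τ), fun a b hab => congrArg Prod.fst hab⟩) := by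
    intro τ1 _ τ2 _ hne
    rw [Function.onFun, Finset.disjoint_left]
    rintro ⟨x, τ⟩ hx1 hx2
    simp only [Finset.mem_map, Function.Embedding.coeFn_mk, Prod.mk.injEq] at hx1 hx2
    obtain ⟨a, -, -, rfl⟩ := hx1
    obtain ⟨b, -, h2⟩ := hx2
    exact hne (congrArg Prod.snd h2).symm
  have h : lowerAdj lt σ = (boundary lt σ).disjiUnion
      (fun τ => ((coboundary lt τ).erase σ).map
        ⟨fun x => (x, τ), fun a b hab => congrArg Prod.fst hab⟩) hdisj := by
    ext ⟨x, τ⟩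
    simp only [mem_lowerAdj, Finset.mem_disjiUnion, Finset.mem_map,
      Function.Embedding.coeFn_mk, Finset.mem_erase, mem_coboundary, mem_boundary,
      Prod.mk.injEq]
    constructor
    · rintro ⟨h1, h2, h3⟩
      exact ⟨τ, h1, x, ⟨h3, h2⟩, rfl⟩
    · rintro ⟨τ', hτ', a, ⟨ha1, ha2⟩, rfl, rfl⟩
      exact ⟨hτ', ha2, ha1⟩
  rw [h, Finset.disjiUnion_val]
  apply Multiset.bind_congr
  intro τ _
  rw [Finset.map_val]
  rfl

/-- The multiset of second components of upper-adjacency pairs, colored at level `s+1`,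
is the coboundary color multiset expanded by boundary-cardinality-minus-one. -/
theorem upper_snd_map (lt : α → α → Prop) (s : ℕ) (σ : α) :
    ((upperAdj lt σ).val.map (fun p => colorBU lt (s+1) p.2))
      = ((coboundary lt σ).val.map (colorBU lt (s+1))).bind
          (fun c => Multiset.replicate (c.2.1.card - 1) c) := by
  classical
  rw [upperAdj_val, Multiset.map_bind, Multiset.bind_map]
  apply Multiset.bind_congr
  intro τ hτ
  have hσ : σ ∈ boundary lt τ := mem_boundary.2 (mem_coboundary.1 hτ)
  rw [Multiset.map_map]
  have : ((fun p : α × α => colorBU lt (s+1) p.2) ∘ fun x => (x, τ))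
      = fun _ => colorBU lt (s+1) τ := rfl
  rw [this, Multiset.map_const']
  have hcard : ((boundary lt τ).erase σ).val.card = (boundary lt τ).card - 1 := by
    rw [← Finset.card_def, Finset.card_erase_of_mem hσ]
  rw [hcard]
  congr 1
  show (boundary lt τ).card - 1 = ((boundary lt τ).val.map (colorBU lt s)).card - 1
  rw [Multiset.card_map, Finset.card_def]

/-- The lower-adjacency pair color multiset, expressed through the boundary. -/
theorem lower_pairs_map {γ : Type*} [DecidableEq γ] (lt : α → α → Prop) (b : α → γ) (σ : α) :
    ((lowerAdj lt σ).val.map (fun p => (b p.1, b p.2)))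
      = (boundary lt σ).val.bind
          (fun τ => (((coboundary lt τ).val.map b).erase (b σ)).map (fun c => (c, b τ))) := by
  classical
  rw [lowerAdj_val, Multiset.map_bind]
  apply Multiset.bind_congr
  intro τ hτ
  have hσ : σ ∈ (coboundary lt τ).val := mem_coboundary.2 (mem_boundary.1 hτ)
  have hval : (coboundary lt τ).val = σ ::ₘ ((coboundary lt τ).erase σ).val := by
    rw [Finset.erase_val, Multiset.cons_erase hσ]
  rw [hval, Multiset.map_cons, Multiset.erase_cons_head, Multiset.map_map, Multiset.map_map]
  rfl

end OnePoset

section Cross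

variable {α β : Type} [Fintype α] [Fintype β]
  {ltα : α → α → Prop} {dimα : α → ℕ} {ltβ : β → β → Prop} {dimβ : β → ℕ}

theorem bu_parts {s : ℕ} {σ : α} {σ' : β}
    (h : colorBU ltα (s+1) σ = colorBU ltβ (s+1) σ') :
    colorBU ltα s σ = colorBU ltβ s σ' ∧
    (boundary ltα σ).val.map (colorBU ltα s) = (boundary ltβ σ').val.map (colorBU ltβ s) ∧
    (upperAdj ltα σ).val.map (fun p => (colorBU ltα s p.1, colorBU ltα s p.2))
      = (upperAdj ltβ σ').val.map (fun p => (colorBU ltβ s p.1, colorBU ltβ s p.2)) := by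
  exact ⟨congrArg Prod.fst h, congrArg (fun x => x.2.1) h, congrArg (fun x => x.2.2) h⟩

theorem color_parts {t : ℕ} {σ : α} {σ' : β}
    (h : color ltα (t+1) σ = color ltβ (t+1) σ') :
    color ltα t σ = color ltβ t σ' ∧
    (boundary ltα σ).val.map (color ltα t) = (boundary ltβ σ').val.map (color ltβ t) ∧
    (coboundary ltα σ).val.map (color ltα t) = (coboundary ltβ σ').val.map (color ltβ t) ∧
    (lowerAdj ltα σ).val.map (fun p => (color ltα t p.1, color ltα t p.2))
      = (lowerAdj ltβ σ').val.map (fun p => (color ltβ t p.1, color ltβ t p.2)) ∧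
    (upperAdj ltα σ).val.map (fun p => (color ltα t p.1, color ltα t p.2))
      = (upperAdj ltβ σ').val.map (fun p => (color ltβ t p.1, color ltβ t p.2)) := by
  exact ⟨congrArg Prod.fst h, congrArg (fun x => x.2.1) h, congrArg (fun x => x.2.2.1) h,
    congrArg (fun x => x.2.2.2.1) h, congrArg (fun x => x.2.2.2.2) h⟩

/-- Key recovery: two extra `GWL_{B,↑}` rounds determine the coboundary color multiset. -/
theorem cob_map_eq (hPα : IsGradedPoset ltα dimα) (hPβ : IsGradedPoset ltβ dimβ)
    (hbα : ∀ σ : α, 0 < dimα σ → 2 ≤ (boundary ltα σ).card)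
    (hbβ : ∀ σ : β, 0 < dimβ σ → 2 ≤ (boundary ltβ σ).card)
    {s : ℕ} {σ : α} {σ' : β}
    (h : colorBU ltα (s+1+1) σ = colorBU ltβ (s+1+1) σ') :
    (coboundary ltα σ).val.map (colorBU ltα (s+1))
      = (coboundary ltβ σ').val.map (colorBU ltβ (s+1)) := by
  have h3 := (bu_parts h).2.2
  have hsnd : (upperAdj ltα σ).val.map (fun p => colorBU ltα (s+1) p.2)
      = (upperAdj ltβ σ').val.map (fun p => colorBU ltβ (s+1) p.2) := by
    have := congrArg (Multiset.map Prod.snd) h3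
    simpa [Multiset.map_map, Function.comp] using this
  rw [upper_snd_map, upper_snd_map] at hsnd
  refine bind_replicate_injective ?_ ?_ hsnd
  · intro c hc
    obtain ⟨τ, hτ, rfl⟩ := Multiset.mem_map.1 hc
    have hcov : Covers ltα σ τ := mem_coboundary.1 hτ
    have hdim : 0 < dimα τ := by rw [hPα.cover σ τ hcov]; omega
    have h2 := hbα τ hdim
    show 1 ≤ ((boundary ltα τ).val.map (colorBU ltα s)).card - 1
    rw [Multiset.card_map, ← Finset.card_def]
    omega
  · intro c hc
    obtain ⟨τ, hτ, rfl⟩ := Multiset.mem_map.1 hc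
    have hcov : Covers ltβ σ' τ := mem_coboundary.1 hτ
    have hdim : 0 < dimβ τ := by rw [hPβ.cover σ' τ hcov]; omega
    have h2 := hbβ τ hdim
    show 1 ≤ ((boundary ltβ τ).val.map (colorBU ltβ s)).card - 1
    rw [Multiset.card_map, ← Finset.card_def]
    omega

end Cross
section Main

variable {α β : Type} [Fintype α] [Fintype β]
  {ltα : α → α → Prop} {dimα : α → ℕ} {ltβ : β → β → Prop} {dimβ : β → ℕ}

/-- The GWL coloring refines the `GWL_{B,↑}` coloring round by round. -/
theorem easy_direction : ∀ (t : ℕ) (σ : α) (σ' : β),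
    color ltα t σ = color ltβ t σ' → colorBU ltα t σ = colorBU ltβ t σ' := by
  intro t
  induction t with
  | zero => intro σ σ' _; rfl
  | succ t ih =>
    intro σ σ' h
    obtain ⟨h1, h2, -, -, h5⟩ := color_parts h
    have c1 : colorBU ltα t σ = colorBU ltβ t σ' := ih σ σ' h1
    have c2 : (boundary ltα σ).val.map (colorBU ltα t)
        = (boundary ltβ σ').val.map (colorBU ltβ t) :=
      map_congr_of_map_eq h2 (fun x _ y _ hxy => ih x y hxy)
    have c3 : (upperAdj ltα σ).val.map (fun p => (colorBU ltα t p.1, colorBU ltα t p.2))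
        = (upperAdj ltβ σ').val.map (fun p => (colorBU ltβ t p.1, colorBU ltβ t p.2)) :=
      map_congr_of_map_eq h5 (fun x _ y _ hxy => by
        have u := congrArg Prod.fst hxy
        have v := congrArg Prod.snd hxy
        rw [show (color ltα t x.1, color ltα t x.2).1 = color ltα t x.1 from rfl] at u
        rw [ih x.1 y.1 u, ih x.2 y.2 v])
    show ((colorBU ltα t σ, (boundary ltα σ).val.map (colorBU ltα t),
        (upperAdj ltα σ).val.map fun p => (colorBU ltα t p.1, colorBU ltα t p.2)) : GWLC2 (t+1))
      = (colorBU ltβ t σ', (boundary ltβ σ').val.map (colorBU ltβ t),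
        (upperAdj ltβ σ').val.map fun p => (colorBU ltβ t p.1, colorBU ltβ t p.2))
    rw [c1, c2, c3]

/-- `2t+1` rounds of the `GWL_{B,↑}` coloring refine `t` rounds of the GWL coloring. -/
theorem hard_direction (hPα : IsGradedPoset ltα dimα) (hPβ : IsGradedPoset ltβ dimβ)
    (hbα : ∀ σ : α, 0 < dimα σ → 2 ≤ (boundary ltα σ).card)
    (hbβ : ∀ σ : β, 0 < dimβ σ → 2 ≤ (boundary ltβ σ).card) :
    ∀ (t : ℕ) (σ : α) (σ' : β),
      colorBU ltα (2 * t + 1) σ = colorBU ltβ (2 * t + 1) σ' →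
      color ltα t σ = color ltβ t σ' := by
  intro t
  induction t with
  | zero => intro σ σ' _; rfl
  | succ t ih =>
    intro σ σ' h
    classical
    have h' : colorBU ltα (2*t+1+1+1) σ = colorBU ltβ (2*t+1+1+1) σ' := h
    obtain ⟨h2, hB2, hU2⟩ := bu_parts h'
    obtain ⟨h1, -, -⟩ := bu_parts h2
    have step : ∀ (x : α) (y : β),
        colorBU ltα (2*t+1+1) x = colorBU ltβ (2*t+1+1) y →
        color ltα t x = color ltβ t y :=
      fun x y hxy => ih x y (bu_parts hxy).1
    have c1 : color ltα t σ = color ltβ t σ' := ih σ σ' h1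
    have c2 : (boundary ltα σ).val.map (color ltα t)
        = (boundary ltβ σ').val.map (color ltβ t) :=
      map_congr_of_map_eq hB2 (fun x _ y _ hxy => step x y hxy)
    have hcob := cob_map_eq hPα hPβ hbα hbβ (s := 2*t+1) h'
    have c3 : (coboundary ltα σ).val.map (color ltα t)
        = (coboundary ltβ σ').val.map (color ltβ t) :=
      map_congr_of_map_eq hcob (fun x _ y _ hxy => step x y hxy)
    have key : (lowerAdj ltα σ).val.map
          (fun p => (colorBU ltα (2*t+1) p.1, colorBU ltα (2*t+1) p.2))
        = (lowerAdj ltβ σ').val.map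
          (fun p => (colorBU ltβ (2*t+1) p.1, colorBU ltβ (2*t+1) p.2)) := by
      rw [lower_pairs_map ltα (colorBU ltα (2*t+1)) σ,
        lower_pairs_map ltβ (colorBU ltβ (2*t+1)) σ']
      refine bind_congr_of_map_eq hB2 ?_
      intro τ hτ τ' hτ' hττ'
      have e1 : colorBU ltα (2*t+1) τ = colorBU ltβ (2*t+1) τ' := (bu_parts hττ').1
      have e2 := cob_map_eq hPα hPβ hbα hbβ (s := 2*t) hττ'
      rw [e1, e2, h1]
    have c4 : (lowerAdj ltα σ).val.map (fun p => (color ltα t p.1, color ltα t p.2))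
        = (lowerAdj ltβ σ').val.map (fun p => (color ltβ t p.1, color ltβ t p.2)) :=
      map_congr_of_map_eq key (fun x _ y _ hxy => by
        have u := congrArg Prod.fst hxy
        have v := congrArg Prod.snd hxy
        rw [ih x.1 y.1 u, ih x.2 y.2 v])
    have c5 : (upperAdj ltα σ).val.map (fun p => (color ltα t p.1, color ltα t p.2))
        = (upperAdj ltβ σ').val.map (fun p => (color ltβ t p.1, color ltβ t p.2)) :=
      map_congr_of_map_eq hU2 (fun x _ y _ hxy => by
        have u := congrArg Prod.fst hxy
        have v := congrArg Prod.snd hxy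
        rw [step x.1 y.1 u, step x.2 y.2 v])
    show ((color ltα t σ, (boundary ltα σ).val.map (color ltα t),
        (coboundary ltα σ).val.map (color ltα t),
        (lowerAdj ltα σ).val.map (fun p => (color ltα t p.1, color ltα t p.2)),
        (upperAdj ltα σ).val.map (fun p => (color ltα t p.1, color ltα t p.2))) : GWLC (t+1))
      = (color ltβ t σ', (boundary ltβ σ').val.map (color ltβ t),
        (coboundary ltβ σ').val.map (color ltβ t),
        (lowerAdj ltβ σ').val.map (fun p => (color ltβ t p.1, color ltβ t p.2)),
        (upperAdj ltβ σ').val.map (fun p => (color ltβ t p.1, color ltβ t p.2)))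
    rw [c1, c2, c3, c4, c5]

end Main

end GWL

/-- On finite graded posets in which every element of positive dimension
has at least two boundary elements, the GWL test (all four adjacencies, coloring `a_t`) and
the `GWL_{B,↑}` test (only boundary and upper adjacency, coloring `b_t`) have the same
expressive power: `b_{2t+1}` refines `a_t`, `a_t` refines `b_t`, and the two notions of
equivalence of the two posets coincide. -/
theorem gwl_equiv_gwlBU
    {α β : Type} [Fintype α] [Fintype β]
    (ltα : α → α → Prop) (dimα : α → ℕ) (ltβ : β → β → Prop) (dimβ : β → ℕ)
    (hP : GWL.IsGradedPoset ltα dimα) (hP' : GWL.IsGradedPoset ltβ dimβ)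
    (hbα : ∀ σ : α, 0 < dimα σ → 2 ≤ (GWL.boundary ltα σ).card)
    (hbβ : ∀ σ : β, 0 < dimβ σ → 2 ≤ (GWL.boundary ltβ σ).card) :
    (∀ (t : ℕ) (σ : α) (σ' : β),
        GWL.colorBU ltα (2 * t + 1) σ = GWL.colorBU ltβ (2 * t + 1) σ' →
        GWL.color ltα t σ = GWL.color ltβ t σ') ∧
    (∀ (t : ℕ) (σ : α) (σ' : β),
        GWL.color ltα t σ = GWL.color ltβ t σ' →
        GWL.colorBU ltα t σ = GWL.colorBU ltβ t σ') ∧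
    ((∀ t : ℕ, GWL.hist ltα t = GWL.hist ltβ t) ↔
        (∀ t : ℕ, GWL.histBU ltα t = GWL.histBU ltβ t)) := by
  refine ⟨fun t σ σ' h => GWL.hard_direction hP hP' hbα hbβ t σ σ' h,
    fun t σ σ' h => GWL.easy_direction t σ σ' h, ?_, ?_⟩
  · intro H t
    have h := H t
    simp only [GWL.hist] at h
    simp only [GWL.histBU]
    exact GWL.map_congr_of_map_eq h (fun x _ y _ hxy => GWL.easy_direction t x y hxy)
  · intro H t
    have h := H (2 * t + 1)
    simp only [GWL.histBU] at h
    simp only [GWL.hist]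
    exact GWL.map_congr_of_map_eq h
      (fun x _ y _ hxy => GWL.hard_direction hP hP' hbα hbβ t x y hxy)
end

section
/- Let P and P' be finite graded posets in which every element of positive dimension has at least two boundary elements. Let c be a coloring of the elements of P and P' into a common color set such that equal colors imply equal boundary cardinalities: c(δ) = c(δ') implies |B(δ)| = |B(δ')| for all elements δ, δ' of P or P'. Suppose σ ∈ P and σ' ∈ P' have equal upper-adjacency pair multisets: {{(c(σ''), c(τ)) : (σ'', τ) ∈ N↑(σ)}} = {{(c(σ''), c(τ)) : (σ'', τ) ∈ N↑(σ')}}. Then the coboundary color multisets are equal: {{c(δ) : δ ∈ C(σ)}} = {{c(δ') : δ' ∈ C(σ')}}. (Each δ ∈ C(σ) contributes its color exactly |B(δ)| − 1 ≥ 1 times as the second component of an upper-adjacency pair, so the coboundary multiset is recoverable by dividing multiplicities by |B(δ)| − 1.) -/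
open GWL Finset in
lemma GWL.count_upperAdj_snd {α S : Type} [Fintype α] [DecidableEq S]
    (lt : α → α → Prop) (c : α → S) (σ : α) (s : S) :
    Multiset.count s ((upperAdj lt σ).val.map (fun p => c p.2))
      = ∑ τ ∈ (coboundary lt σ).filter (fun τ => s = c τ),
          ((boundary lt τ).card - 1) := by
  classical
  rw [Multiset.count_map]
  have hval : (upperAdj lt σ).val.filter (fun p => s = c p.2)
      = ((upperAdj lt σ).filter (fun p => s = c p.2)).val := (Finset.filter_val _ _).symm
  rw [hval, ← Finset.card_def]
  rw [Finset.card_eq_sum_card_fiberwise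
    (f := Prod.snd) (t := (coboundary lt σ).filter (fun τ => s = c τ))
    (by
      intro p hp
      simp only [Finset.mem_coe, Finset.mem_filter, upperAdj, coboundary, Finset.mem_univ, true_and]
        at hp ⊢
      exact ⟨hp.1.1, hp.2⟩)]
  refine Finset.sum_congr rfl ?_
  intro τ hτ
  simp only [Finset.mem_filter, coboundary, Finset.mem_univ, true_and] at hτ
  have hfib : ((upperAdj lt σ).filter (fun p => s = c p.2)).filter (fun p => p.2 = τ)
      = ((boundary lt τ).erase σ).image (fun x => (x, τ)) := by
    ext p
    simp only [Finset.mem_filter, Finset.mem_image, Finset.mem_erase, upperAdj,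
      boundary, Finset.mem_univ, true_and]
    constructor
    · rintro ⟨⟨⟨h1, h2, h3⟩, hs⟩, h4⟩
      exact ⟨p.1, ⟨h3, h4 ▸ h2⟩, by rw [← h4]⟩
    · rintro ⟨x, ⟨hx1, hx2⟩, rfl⟩
      exact ⟨⟨⟨hτ.1, hx2, hx1⟩, hτ.2⟩, rfl⟩
  rw [hfib, Finset.card_image_of_injective _ (fun a b h => (Prod.mk.injEq _ _ _ _ ▸ h).1),
    Finset.card_erase_of_mem]
  simp only [boundary, Finset.mem_filter, Finset.mem_univ, true_and]
  exact hτ.1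

/-- In finite graded posets where every element of positive dimension has
at least two boundary elements, the coboundary color multiset is recoverable from the
upper-adjacency pair multiset: if a coloring `c` (into a common color set, compared across
both posets) determines boundary cardinalities, and `σ ∈ P`, `σ' ∈ P'` have equal
upper-adjacency pair multisets, then their coboundary color multisets are equal. -/
theorem coboundary_recoverable_from_upper_adjacency
    {α β S : Type} [Fintype α] [Fintype β]
    (ltα : α → α → Prop) (dimα : α → ℕ) (ltβ : β → β → Prop) (dimβ : β → ℕ)
    (hP : GWL.IsGradedPoset ltα dimα) (hP' : GWL.IsGradedPoset ltβ dimβ)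
    (hbα : ∀ σ : α, 0 < dimα σ → 2 ≤ (GWL.boundary ltα σ).card)
    (hbβ : ∀ σ : β, 0 < dimβ σ → 2 ≤ (GWL.boundary ltβ σ).card)
    (cα : α → S) (cβ : β → S)
    (hc : ∀ x y : α ⊕ β, Sum.elim cα cβ x = Sum.elim cα cβ y →
        Sum.elim (fun δ => (GWL.boundary ltα δ).card) (fun δ => (GWL.boundary ltβ δ).card) x
          = Sum.elim (fun δ => (GWL.boundary ltα δ).card)
              (fun δ => (GWL.boundary ltβ δ).card) y)
    (σ : α) (σ' : β)
    (hupper : (GWL.upperAdj ltα σ).val.map (fun p => (cα p.1, cα p.2))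
        = (GWL.upperAdj ltβ σ').val.map (fun p => (cβ p.1, cβ p.2))) :
    (GWL.coboundary ltα σ).val.map cα = (GWL.coboundary ltβ σ').val.map cβ := by
  classical
  have h2 := congrArg (Multiset.map Prod.snd) hupper
  simp only [Multiset.map_map, Function.comp] at h2
  have hcovα : ∀ τ ∈ GWL.coboundary ltα σ, 2 ≤ (GWL.boundary ltα τ).card := by
    intro τ hτ
    simp only [GWL.coboundary, Finset.mem_filter, Finset.mem_univ, true_and] at hτ
    exact hbα τ (by rw [hP.cover σ τ hτ]; omega)
  have hcovβ : ∀ τ ∈ GWL.coboundary ltβ σ', 2 ≤ (GWL.boundary ltβ τ).card := by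
    intro τ hτ
    simp only [GWL.coboundary, Finset.mem_filter, Finset.mem_univ, true_and] at hτ
    exact hbβ τ (by rw [hP'.cover σ' τ hτ]; omega)
  rw [Multiset.ext]
  intro s
  have h3 : Multiset.count s ((GWL.upperAdj ltα σ).val.map (fun p => cα p.2))
      = Multiset.count s ((GWL.upperAdj ltβ σ').val.map (fun p => cβ p.2)) := by
    rw [h2]
  rw [GWL.count_upperAdj_snd ltα cα σ s, GWL.count_upperAdj_snd ltβ cβ σ' s] at h3
  set Fα := (GWL.coboundary ltα σ).filter (fun τ => s = cα τ) with hFα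
  set Fβ := (GWL.coboundary ltβ σ').filter (fun τ => s = cβ τ) with hFβ
  rw [Multiset.count_map, Multiset.count_map,
    show (GWL.coboundary ltα σ).val.filter (fun a => s = cα a) = Fα.val from
      (Finset.filter_val _ _).symm,
    show (GWL.coboundary ltβ σ').val.filter (fun a => s = cβ a) = Fβ.val from
      (Finset.filter_val _ _).symm,
    ← Finset.card_def, ← Finset.card_def]
  have hmemα : ∀ τ ∈ Fα, τ ∈ GWL.coboundary ltα σ ∧ s = cα τ := by
    intro τ hτ; exact Finset.mem_filter.mp hτ
  have hmemβ : ∀ τ ∈ Fβ, τ ∈ GWL.coboundary ltβ σ' ∧ s = cβ τ := by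
    intro τ hτ; exact Finset.mem_filter.mp hτ
  rcases Fα.eq_empty_or_nonempty with hα | ⟨δ, hδ⟩
  · rcases Fβ.eq_empty_or_nonempty with hβ | ⟨δ', hδ'⟩
    · rw [hα, hβ]
      rfl
    · exfalso
      rw [hα, Finset.sum_empty] at h3
      have hle : (GWL.boundary ltβ δ').card - 1
          ≤ ∑ τ ∈ Fβ, ((GWL.boundary ltβ τ).card - 1) :=
        Finset.single_le_sum (f := fun τ => (GWL.boundary ltβ τ).card - 1) (fun i _ => Nat.zero_le _) hδ'
      have := hcovβ δ' (hmemβ δ' hδ').1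
      omega
  · rcases Fβ.eq_empty_or_nonempty with hβ | ⟨δ', hδ'⟩
    · exfalso
      rw [hβ, Finset.sum_empty] at h3
      have hle : (GWL.boundary ltα δ).card - 1
          ≤ ∑ τ ∈ Fα, ((GWL.boundary ltα τ).card - 1) :=
        Finset.single_le_sum (f := fun τ => (GWL.boundary ltα τ).card - 1) (fun i _ => Nat.zero_le _) hδ
      have := hcovα δ (hmemα δ hδ).1
      omega
    · have hbb : (GWL.boundary ltα δ).card = (GWL.boundary ltβ δ').card := by
        have := hc (Sum.inl δ) (Sum.inr δ')
          (by simp [← (hmemα δ hδ).2, ← (hmemβ δ' hδ').2])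
        simpa using this
      have hsumα : ∑ τ ∈ Fα, ((GWL.boundary ltα τ).card - 1)
          = Fα.card * ((GWL.boundary ltα δ).card - 1) := by
        rw [Finset.sum_congr rfl (fun τ hτ => by
          have := hc (Sum.inl τ) (Sum.inl δ)
            (by simp [← (hmemα τ hτ).2, ← (hmemα δ hδ).2])
          simpa using congrArg (· - 1) this), Finset.sum_const, smul_eq_mul]
      have hsumβ : ∑ τ ∈ Fβ, ((GWL.boundary ltβ τ).card - 1)
          = Fβ.card * ((GWL.boundary ltβ δ').card - 1) := by
        rw [Finset.sum_congr rfl (fun τ hτ => by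
          have := hc (Sum.inr τ) (Sum.inr δ')
            (by simp [← (hmemβ τ hτ).2, ← (hmemβ δ' hδ').2])
          simpa using congrArg (· - 1) this), Finset.sum_const, smul_eq_mul]
      rw [hsumα, hsumβ, hbb] at h3
      have h2b := hcovβ δ' (hmemβ δ' hδ').1
      exact Nat.eq_of_mul_eq_mul_right (by omega) h3
end
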